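/- In the three-vertex mean-payoff game with vertices {1,2,3}, where Player 1 controls vertex 1 (self-loop a with payoff (0,0), move b to vertex 2 with payoff (0,0)) and Player 0 controls vertices 2,3 (edges labeled c with Player-1 payoff 2 and d with Player-1 payoff 1), the strategy σ₀ of Player 0 that, if Player 1 played a exactly k times before b, forever repeats c^k followed by one d, yields: the strategy σ₁^ω (always a) gives Player 1 mean-payoff 0, while σ₁^k (k times a then b) gives Player 1 mean-payoff (2k+1)/(k+1); hence Player 1 payoffs are strictly increasing in k and no best response to σ₀ exists. -/
import Mathlib

/-- Player 1's weight sequence (on his own dimension) produced when he plays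
`a` exactly `k` times and then `b` (each with payoff `0`), against the Player 0
strategy that then forever repeats `k` times `c` (payoff `2`) followed by one
`d` (payoff `1`). -/
def seqAgainst (k : ℕ) : ℕ → ℝ := fun n =>
  if n ≤ k then 0 else if (n - (k + 1)) % (k + 1) < k then 2 else 1

/-- The mean-payoff of a weight sequence. -/
noncomputable def MP (a : ℕ → ℝ) : ℝ :=
  Filter.liminf (fun n : ℕ => (∑ i ∈ Finset.range n, a i) / n) Filter.atTop

lemma sum_bN (k m : ℕ) :
    ∑ j ∈ Finset.range m, (if j % (k+1) < k then (2:ℕ) else 1) = 2*m - m/(k+1) := by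
  induction m with
  | zero => simp
  | succ m ih =>
    rw [Finset.sum_range_succ, ih, Nat.succ_div]
    have hm : m % (k+1) < k + 1 := Nat.mod_lt _ (Nat.succ_pos k)
    have hdvd : (k+1) ∣ (m+1) ↔ m % (k+1) = k := by
      rw [Nat.dvd_iff_mod_eq_zero, Nat.add_mod]
      rcases Nat.eq_zero_or_pos k with hk | hk
      · subst hk; simp
      · have h1 : 1 % (k+1) = 1 := Nat.mod_eq_of_lt (by omega)
        rw [h1]
        constructor
        · intro h
          by_contra hne
          have hlt : m % (k+1) + 1 < k + 1 := by omega
          rw [Nat.mod_eq_of_lt hlt] at h; omega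
        · intro h; rw [h]; simp
    have hle : m / (k+1) ≤ m := Nat.div_le_self _ _
    by_cases hc : m % (k+1) < k
    · have hnd : ¬ (k+1) ∣ (m+1) := by rw [hdvd]; omega
      simp only [if_pos hc, if_neg hnd]
      omega
    · have hk : m % (k+1) = k := by omega
      have hd : (k+1) ∣ (m+1) := hdvd.mpr hk
      simp only [if_neg hc, if_pos hd]
      omega

lemma sum_seq (k n : ℕ) :
    ∑ i ∈ Finset.range n, seqAgainst k i
      = ((2*(n-(k+1)) - (n-(k+1))/(k+1) : ℕ) : ℝ) := by
  rcases le_or_gt n (k+1) with h | h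
  · have hn : n - (k+1) = 0 := by omega
    rw [hn]
    simp only [Nat.mul_zero, Nat.zero_sub, Nat.zero_div, Nat.cast_zero]
    refine Finset.sum_eq_zero fun i hi => ?_
    rw [Finset.mem_range] at hi
    simp [seqAgainst, show i ≤ k by omega]
  · obtain ⟨m, rfl⟩ : ∃ m, n = (k+1) + m := ⟨n - (k+1), by omega⟩
    rw [Finset.sum_range_add]
    have h1 : ∑ i ∈ Finset.range (k+1), seqAgainst k i = 0 := by
      refine Finset.sum_eq_zero fun i hi => ?_
      rw [Finset.mem_range] at hi
      simp [seqAgainst, show i ≤ k by omega]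
    have h2 : ∀ j, seqAgainst k ((k+1) + j)
        = ((if j % (k+1) < k then (2:ℕ) else 1 : ℕ) : ℝ) := by
      intro j
      simp only [seqAgainst, if_neg (show ¬ ((k+1)+j ≤ k) by omega),
        show (k+1)+j - (k+1) = j by omega]
      split <;> norm_num
    simp only [h1, h2, zero_add, ← Nat.cast_sum, sum_bN,
      show (k+1) + m - (k+1) = m by omega]

lemma tendsto_avg (k : ℕ) :
    Filter.Tendsto (fun n : ℕ => (∑ i ∈ Finset.range n, seqAgainst k i) / n)
      Filter.atTop (nhds ((2 * (k : ℝ) + 1) / ((k : ℝ) + 1))) := by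
  set L : ℝ := (2 * (k : ℝ) + 1) / ((k : ℝ) + 1) with hL
  set C : ℝ := 2*(k:ℝ) + 4 with hC
  have hK : (0:ℝ) < (k:ℝ) + 1 := by positivity
  have hbound : ∀ n : ℕ, (k+1) ≤ n →
      |(∑ i ∈ Finset.range n, seqAgainst k i) - L * n| ≤ C := by
    intro n hn
    rw [sum_seq]
    set m : ℕ := n - (k+1) with hm
    set q : ℕ := m / (k+1) with hq
    have hqm : (k+1) * q + m % (k+1) = m := Nat.div_add_mod m (k+1)
    have hr : m % (k+1) < k+1 := Nat.mod_lt _ (Nat.succ_pos k)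
    have hqle : q ≤ m := Nat.div_le_self _ _
    have hcast : ((2*m - q : ℕ) : ℝ) = 2*(m:ℝ) - (q:ℝ) := by
      have hq2 : q ≤ 2*m := by omega
      push_cast [Nat.cast_sub hq2]; ring
    rw [hcast]
    have hnm : (n:ℝ) = (m:ℝ) + ((k:ℝ)+1) := by
      have hn' : n = m + (k+1) := by omega
      rw [hn']; push_cast; ring
    have hLn : L * (n:ℝ) = (2*(k:ℝ)+1) * ((m:ℝ) + ((k:ℝ)+1)) / ((k:ℝ)+1) := by
      rw [hnm, hL]; field_simp
    have hqreal : ((k:ℝ)+1) * (q:ℝ) + ((m % (k+1) : ℕ):ℝ) = (m:ℝ) := by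
      exact_mod_cast congrArg (Nat.cast : ℕ → ℝ) hqm
    have hrreal : ((m % (k+1) : ℕ):ℝ) < (k:ℝ)+1 := by exact_mod_cast hr
    have hrnn : (0:ℝ) ≤ ((m % (k+1) : ℕ):ℝ) := Nat.cast_nonneg _
    have hD : (2*(k:ℝ)+1)*((m:ℝ)+((k:ℝ)+1)) / ((k:ℝ)+1) * ((k:ℝ)+1)
        = (2*(k:ℝ)+1)*((m:ℝ)+((k:ℝ)+1)) := div_mul_cancel₀ _ (ne_of_gt hK)
    rw [hLn, abs_le]
    constructor
    · nlinarith [hD, hqreal, hrreal, hrnn, hK]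
    · nlinarith [hD, hqreal, hrreal, hrnn, hK]
  have hC0 : (0:ℝ) < C := by positivity
  have htend : Filter.Tendsto (fun n : ℕ => C / n) Filter.atTop (nhds 0) :=
    tendsto_const_div_atTop_nhds_zero_nat C
  have h1 : Filter.Tendsto (fun n : ℕ => L - C / n) Filter.atTop (nhds L) := by
    simpa using (tendsto_const_nhds.sub htend)
  have h2 : Filter.Tendsto (fun n : ℕ => L + C / n) Filter.atTop (nhds L) := by
    simpa using (tendsto_const_nhds.add htend)
  refine tendsto_of_tendsto_of_tendsto_of_le_of_le' h1 h2 ?_ ?_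
  · filter_upwards [Filter.eventually_ge_atTop (k+1)] with n hn
    have hn0 : (0:ℝ) < n := by
      have : 1 ≤ n := by omega
      exact_mod_cast Nat.lt_of_lt_of_le Nat.zero_lt_one this
    have hb := hbound n hn
    rw [abs_le] at hb
    have heq : L - C / n = (L * n - C) / n := by field_simp
    rw [heq, div_le_div_iff₀ hn0 hn0]
    nlinarith [hb.1]
  · filter_upwards [Filter.eventually_ge_atTop (k+1)] with n hn
    have hn0 : (0:ℝ) < n := by
      have : 1 ≤ n := by omega
      exact_mod_cast Nat.lt_of_lt_of_le Nat.zero_lt_one this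
    have hb := hbound n hn
    rw [abs_le] at hb
    have heq : L + C / n = (L * n + C) / n := by field_simp
    rw [heq, div_le_div_iff₀ hn0 hn0]
    nlinarith [hb.2]

theorem no_best_response_example :
    (∀ k : ℕ, MP (seqAgainst k) = (2 * (k : ℝ) + 1) / ((k : ℝ) + 1)) ∧
    MP (fun _ => (0 : ℝ)) = 0 ∧
    (∀ k₁ k₂ : ℕ, k₁ < k₂ →
      (2 * (k₁ : ℝ) + 1) / ((k₁ : ℝ) + 1) < (2 * (k₂ : ℝ) + 1) / ((k₂ : ℝ) + 1)) ∧
    ¬ ∃ v ∈ (insert 0 (Set.range fun k : ℕ => (2 * (k : ℝ) + 1) / ((k : ℝ) + 1)) : Set ℝ),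
        ∀ u ∈ (insert 0 (Set.range fun k : ℕ => (2 * (k : ℝ) + 1) / ((k : ℝ) + 1)) : Set ℝ),
          u ≤ v := by
  have hmono : ∀ k₁ k₂ : ℕ, k₁ < k₂ →
      (2 * (k₁ : ℝ) + 1) / ((k₁ : ℝ) + 1) < (2 * (k₂ : ℝ) + 1) / ((k₂ : ℝ) + 1) := by
    intro k₁ k₂ h
    have h1 : (0:ℝ) < (k₁:ℝ) + 1 := by positivity
    have h2 : (0:ℝ) < (k₂:ℝ) + 1 := by positivity
    have hc : (k₁:ℝ) < (k₂:ℝ) := by exact_mod_cast h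
    rw [div_lt_div_iff₀ h1 h2]
    nlinarith
  refine ⟨fun k => (tendsto_avg k).liminf_eq, ?_, hmono, ?_⟩
  · have : ∀ n : ℕ, (∑ i ∈ Finset.range n, (0:ℝ)) / n = 0 := by
      intro n; simp
    unfold MP
    simp only [this, Filter.liminf_const]
  · rintro ⟨v, hv, hmax⟩
    rcases hv with rfl | ⟨k, rfl⟩
    · have h0 : (2 * ((0:ℕ) : ℝ) + 1) / (((0:ℕ) : ℝ) + 1)
          ∈ (insert 0 (Set.range fun k : ℕ => (2 * (k : ℝ) + 1) / ((k : ℝ) + 1)) : Set ℝ) :=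
        Set.mem_insert_iff.mpr (Or.inr ⟨0, rfl⟩)
      have := hmax _ h0
      norm_num at this
    · have h0 : (2 * ((k+1:ℕ) : ℝ) + 1) / (((k+1:ℕ) : ℝ) + 1)
          ∈ (insert 0 (Set.range fun k : ℕ => (2 * (k : ℝ) + 1) / ((k : ℝ) + 1)) : Set ℝ) :=
        Set.mem_insert_iff.mpr (Or.inr ⟨k+1, rfl⟩)
      have hle := hmax _ h0
      exact absurd hle (not_le.mpr (hmono k (k+1) (Nat.lt_succ_self k)))
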